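/- For every P ∈ S², the maps W_P and W_{−P} from RP² to itself are equal, and the fixed point set of W_P is exactly the singleton {p(P)}, i.e. {x̄ ∈ RP² | W_P(x̄) = x̄} = {p(P)}. -/

import Mathlib

noncomputable section

open Metric

abbrev E3 := EuclideanSpace ℝ (Fin 3)
abbrev S2 := Metric.sphere (0 : E3) 1

/-- Ordered configuration space. -/
def Conf (n : ℕ) (Y : Type*) [TopologicalSpace Y] : Type _ :=
  {y : Fin n → Y // Function.Injective y}

instance (n : ℕ) (Y : Type*) [TopologicalSpace Y] : TopologicalSpace (Conf n Y) :=
  instTopologicalSpaceSubtype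

/-- The setoid on `Conf n Y` given by the permutation action. -/
def permSetoid (n : ℕ) (Y : Type*) [TopologicalSpace Y] : Setoid (Conf n Y) where
  r a b := ∃ σ : Equiv.Perm (Fin n), b.1 = a.1 ∘ σ
  iseqv := by
    constructor
    · exact fun a => ⟨1, by ext i; simp⟩
    · rintro a b ⟨σ, h⟩
      exact ⟨σ⁻¹, by ext i; simp [h]⟩
    · rintro a b c ⟨σ, h⟩ ⟨τ, h'⟩
      exact ⟨σ * τ, by ext i; simp [h', h]⟩

/-- Unordered configuration space. -/
def UConf (n : ℕ) (Y : Type*) [TopologicalSpace Y] : Type _ :=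
  Quotient (permSetoid n Y)

instance (n : ℕ) (Y : Type*) [TopologicalSpace Y] : TopologicalSpace (UConf n Y) :=
  instTopologicalSpaceQuotient

lemma S2.ne_neg (x : S2) : (x : E3) ≠ -(x : E3) := by
  intro h
  have hx : (x : E3) = 0 := by
    have h2 : (x : E3) + (x : E3) = 0 := by
      nth_rewrite 2 [h]; simp
    have h3 : (2 : ℝ) • (x : E3) = 0 := by rw [two_smul]; exact h2
    have := smul_eq_zero.mp h3
    simpa using this
  have := x.2
  rw [mem_sphere_zero_iff_norm] at this
  rw [hx] at this
  simp at this

/-- The antipodal setoid on the sphere. -/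
def antipodalSetoid : Setoid S2 where
  r x y := (x : E3) = y ∨ (x : E3) = -y
  iseqv := by
    constructor
    · exact fun x => Or.inl rfl
    · rintro x y (h | h)
      · exact Or.inl h.symm
      · exact Or.inr (by rw [h]; simp)
    · rintro x y z (h | h) (h' | h')
      · exact Or.inl (h.trans h')
      · exact Or.inr (by rw [h, h'])
      · exact Or.inr (by rw [h, h'])
      · exact Or.inl (by rw [h, h']; simp)

/-- The real projective plane, as the quotient of the sphere by the antipodal map. -/
def RP2 : Type _ := Quotient antipodalSetoid

instance : TopologicalSpace RP2 := instTopologicalSpaceQuotient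

/-- The canonical projection from the sphere to the projective plane. -/
def pS2 : S2 → RP2 := Quotient.mk antipodalSetoid

lemma pS2.continuous : Continuous pS2 := continuous_quotient_mk'

/-- The underlying vector of the map `U_P`. -/
def Uvec (P x : E3) : E3 := (2 * inner ℝ P x : ℝ) • x - P

lemma Uvec.norm_eq (P x : E3) (hP : ‖P‖ = 1) (hx : ‖x‖ = 1) : ‖Uvec P x‖ = 1 := by
  have h1 : ‖Uvec P x‖ ^ 2 = 1 := by
    rw [Uvec, norm_sub_sq_real, norm_smul, real_inner_smul_left, real_inner_comm x P, hx, hP,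
      Real.norm_eq_abs, mul_one, one_pow, sq_abs]
    ring
  nlinarith [norm_nonneg (Uvec P x)]

lemma Uvec.neg (P x : E3) : Uvec P (-x) = Uvec P x := by
  simp [Uvec, inner_neg_right]

/-- The map `U_P` on the sphere. -/
def USph (P x : S2) : S2 :=
  ⟨Uvec P.1 x.1, by
    rw [mem_sphere_zero_iff_norm]
    exact Uvec.norm_eq _ _ (by simp [← mem_sphere_zero_iff_norm, P.2])
      (by simp [← mem_sphere_zero_iff_norm, x.2])⟩

lemma USph.continuous (P : S2) : Continuous (USph P) := by
  apply Continuous.subtype_mk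
  apply Continuous.sub
  · exact (continuous_const.mul (Continuous.inner (𝕜 := ℝ) continuous_const
      (continuous_subtype_val : Continuous (fun y : S2 => (y : E3))))).smul
      continuous_subtype_val
  · exact continuous_const

/-- The map `W_P` on the projective plane. -/
def WP (P : S2) : RP2 → RP2 :=
  Quotient.lift (fun x => pS2 (USph P x)) (by
    rintro a b (h | h)
    · have hab : a = b := Subtype.ext h
      show pS2 (USph P a) = pS2 (USph P b)
      rw [hab]
    · have hab : USph P a = USph P b :=
        Subtype.ext (show Uvec P.1 a.1 = Uvec P.1 b.1 by rw [h, Uvec.neg])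
      show pS2 (USph P a) = pS2 (USph P b)
      rw [hab])

lemma WP.continuous (P : S2) : Continuous (WP P) :=
  Continuous.quotient_lift (pS2.continuous.comp (USph.continuous P)) _

/-- `W_P` as a continuous map. -/
def WPc (P : S2) : C(RP2, RP2) := ⟨WP P, WP.continuous P⟩

lemma WPc_apply (P : S2) (x : S2) : WPc P (pS2 x) = pS2 (USph P x) := rfl

lemma Uvec.neg_left (P x : E3) : Uvec (-P) x = -(Uvec P x) := by
  simp only [Uvec, inner_neg_left]
  rw [mul_neg, neg_smul, neg_sub']

/-- `W_P = W_{-P}`, and the fixed point set of `W_P : RP² → RP²` is exactly `{p(P)}`. -/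
theorem stmt5 (P : S2) :
    WP P = WP (-P) ∧ {z : RP2 | WP P z = z} = {pS2 P} := by
  have hPn : ‖(P : E3)‖ = 1 := mem_sphere_zero_iff_norm.mp P.2
  have hPP : Uvec P.1 P.1 = P.1 := by
    have h1 : (inner ℝ (P : E3) (P : E3) : ℝ) = 1 := by
      rw [real_inner_self_eq_norm_mul_norm, hPn, one_mul]
    rw [Uvec, h1, mul_one, two_smul]
    abel
  constructor
  · funext z
    induction z using Quotient.ind with
    | _ x =>
      show pS2 (USph P x) = pS2 (USph (-P) x)
      apply Quotient.sound
      right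
      show Uvec (P : E3) (x : E3) = -Uvec ((-P : S2) : E3) (x : E3)
      rw [show ((-P : S2) : E3) = -(P : E3) from rfl, Uvec.neg_left, neg_neg]
  · ext z
    induction z using Quotient.ind with
    | _ x =>
      have hx : ‖(x : E3)‖ = 1 := mem_sphere_zero_iff_norm.mp x.2
      have hxx : (inner ℝ (x : E3) (x : E3) : ℝ) = 1 := by
        rw [real_inner_self_eq_norm_mul_norm, hx, one_mul]
      show WP P (pS2 x) = pS2 x ↔ pS2 x = pS2 P
      constructor
      · intro h
        have h' : Uvec (P : E3) (x : E3) = (x : E3) ∨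
            Uvec (P : E3) (x : E3) = -(x : E3) := Quotient.exact h
        set c : ℝ := inner ℝ (P : E3) (x : E3) with hc
        apply Quotient.sound
        rcases h' with h1 | h1
        · left
          rw [Uvec, ← hc, sub_eq_iff_eq_add] at h1
          have hP : (P : E3) = (2 * c - 1) • (x : E3) := by
            rw [sub_smul, one_smul, h1]
            abel
          have hcv : (inner ℝ (P : E3) (x : E3) : ℝ) = 2 * c - 1 := by
            rw [hP, real_inner_smul_left, hxx, mul_one]
          have : c = 1 := by linarith [hc, hcv]
          rw [hP, this]
          norm_num
        · right
          rw [Uvec, ← hc, sub_eq_iff_eq_add] at h1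
          have hP : (P : E3) = (2 * c + 1) • (x : E3) := by
            rw [add_smul, one_smul, h1]
            abel
          have hcv : (inner ℝ (P : E3) (x : E3) : ℝ) = 2 * c + 1 := by
            rw [hP, real_inner_smul_left, hxx, mul_one]
          have : c = -1 := by linarith [hc, hcv]
          rw [hP, this]
          norm_num
      · intro h
        show WP P (pS2 x) = pS2 x
        rw [show pS2 x = pS2 P from h]
        show pS2 (USph P P) = pS2 P
        congr 1
        exact Subtype.ext hPP
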